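/- Let γ > 0 be real, let L_0 be the ℂ-linear endomorphism of the space of 3×3 complex matrices given by L_0(ρ) := γ·(E_{02} ρ E_{20} − (1/2)(E_{22} ρ + ρ E_{22})), and let P be the ℂ-linear endomorphism given by P(ρ) := (ρ_{00}+ρ_{22}) E_{00} + ρ_{01} E_{01} + ρ_{10} E_{10} + ρ_{11} E_{11}. Then exp(t L_0) converges to P in operator norm as t → +∞. -/

import Mathlib

open Filter

attribute [local instance] Matrix.linftyOpNormedAddCommGroup Matrix.linftyOpNormedSpace

/-- The standard matrix unit `E_{ij}` (a `1` in row `i`, column `j`). -/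
noncomputable def matUnit (i j : Fin 3) : Matrix (Fin 3) (Fin 3) ℂ :=
  Matrix.single i j 1

theorem matCLM_isTopologicalRing :
    IsTopologicalRing (Matrix (Fin 3) (Fin 3) ℂ →L[ℂ] Matrix (Fin 3) (Fin 3) ℂ) :=
  @NonUnitalSeminormedRing.toIsTopologicalRing _ (@ContinuousLinearMap.toNormedRing ℂ
    (Matrix (Fin 3) (Fin 3) ℂ) _ _ _).toNonUnitalNormedRing.toNonUnitalSeminormedRing

attribute [local instance] matCLM_isTopologicalRing

/-- Exponential of a scalar multiple of an idempotent. -/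
lemma exp_smul_idem {A : Type*} [NormedRing A] [NormedAlgebra ℂ A] [CompleteSpace A]
    (c : ℂ) {Q : A} (hQ : Q * Q = Q) :
    NormedSpace.exp (c • Q) = 1 + (Complex.exp c - 1) • Q := by
  have hQn : ∀ n : ℕ, Q ^ (n + 1) = Q := by
    intro n; induction n with
    | zero => simp
    | succ k ih => rw [pow_succ, ih, hQ]
  have hterm : ∀ n : ℕ, ((n.factorial : ℂ))⁻¹ • (c • Q) ^ n
      = (((n.factorial : ℂ))⁻¹ * c ^ n) • Q ^ n := by
    intro n; rw [smul_pow, smul_smul]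
  have hs : Summable fun n : ℕ => (((n.factorial : ℂ))⁻¹ * c ^ n) • Q ^ n := by
    simpa only [hterm] using NormedSpace.expSeries_summable' (𝕂 := ℂ) (c • Q)
  have hcs : Summable fun n : ℕ => ((n.factorial : ℂ))⁻¹ * c ^ n := by
    simpa only [smul_eq_mul] using NormedSpace.expSeries_summable' (𝕂 := ℂ) c
  have hcs' : Summable fun n : ℕ => (((n+1).factorial : ℂ))⁻¹ * c ^ (n+1) := by
    have := hcs.comp_injective Nat.succ_injective
    simpa [Function.comp_def] using this
  have hexpc : Complex.exp c = 1 + ∑' n : ℕ, (((n+1).factorial : ℂ))⁻¹ * c ^ (n+1) := by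
    rw [Complex.exp_eq_exp_ℂ, NormedSpace.exp_eq_tsum (𝕂 := ℂ)]
    beta_reduce
    conv_lhs => rw [Summable.tsum_eq_zero_add (by simpa only [smul_eq_mul] using hcs)]
    simp [smul_eq_mul]
  rw [NormedSpace.exp_eq_tsum (𝕂 := ℂ)]
  simp only [hterm]
  rw [Summable.tsum_eq_zero_add hs]
  simp only [hQn, pow_zero, Nat.factorial_zero, Nat.cast_one, inv_one, one_smul, mul_one,
    one_smul]
  rw [Summable.tsum_smul_const hcs']
  rw [hexpc]
  ring_nf
  congr 2
  exact tsum_congr fun n => by ring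

/-- The eigenprojection of `L₀` for eigenvalue `-γ/2`. -/
noncomputable def Qop : Matrix (Fin 3) (Fin 3) ℂ →L[ℂ] Matrix (Fin 3) (Fin 3) ℂ :=
  LinearMap.toContinuousLinearMap
  { toFun := fun ρ => ρ 0 2 • matUnit 0 2 + ρ 1 2 • matUnit 1 2 +
      ρ 2 0 • matUnit 2 0 + ρ 2 1 • matUnit 2 1
    map_add' := fun ρ σ => by simp [Matrix.add_apply, add_smul]; abel
    map_smul' := fun c ρ => by simp [Matrix.smul_apply, smul_smul, smul_add] }

/-- The eigenprojection of `L₀` for eigenvalue `-γ`. -/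
noncomputable def Rop : Matrix (Fin 3) (Fin 3) ℂ →L[ℂ] Matrix (Fin 3) (Fin 3) ℂ :=
  LinearMap.toContinuousLinearMap
  { toFun := fun ρ => ρ 2 2 • (matUnit 2 2 - matUnit 0 0)
    map_add' := fun ρ σ => by simp [Matrix.add_apply, add_smul]
    map_smul' := fun c ρ => by simp [Matrix.smul_apply, smul_smul] }

lemma Qop_apply (ρ : Matrix (Fin 3) (Fin 3) ℂ) :
    Qop ρ = ρ 0 2 • matUnit 0 2 + ρ 1 2 • matUnit 1 2 +
      ρ 2 0 • matUnit 2 0 + ρ 2 1 • matUnit 2 1 := rfl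

lemma Rop_apply (ρ : Matrix (Fin 3) (Fin 3) ℂ) :
    Rop ρ = ρ 2 2 • (matUnit 2 2 - matUnit 0 0) := rfl

lemma Qop_idem : Qop * Qop = Qop := by
  ext ρ i j
  fin_cases i <;> fin_cases j <;>
    simp [Qop_apply, matUnit, Matrix.single, Matrix.add_apply, Matrix.smul_apply]

lemma Rop_idem : Rop * Rop = Rop := by
  ext ρ i j
  fin_cases i <;> fin_cases j <;>
    simp [Rop_apply, matUnit, Matrix.single, Matrix.sub_apply, Matrix.smul_apply]

lemma Qop_mul_Rop : Qop * Rop = 0 := by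
  ext ρ i j
  fin_cases i <;> fin_cases j <;>
    simp [Qop_apply, Rop_apply, matUnit, Matrix.single, Matrix.sub_apply,
      Matrix.smul_apply]

lemma Rop_mul_Qop : Rop * Qop = 0 := by
  ext ρ i j
  fin_cases i <;> fin_cases j <;>
    simp [Qop_apply, Rop_apply, matUnit, Matrix.single, Matrix.add_apply,
      Matrix.smul_apply]

set_option maxHeartbeats 1600000 in
set_option synthInstance.maxHeartbeats 400000 in
lemma commQR (a b : ℂ) : Commute (a • Qop) (b • Rop) := by
  have : ∀ x : Matrix (Fin 3) (Fin 3) ℂ, ((a • Qop) * (b • Rop)) x = ((b • Rop) * (a • Qop)) x := by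
    intro ρ
    ext i j
    fin_cases i <;> fin_cases j <;>
      simp [ContinuousLinearMap.mul_apply, Qop_apply, Rop_apply, matUnit,
        Matrix.single, Matrix.add_apply, Matrix.sub_apply, Matrix.smul_apply]
  exact ContinuousLinearMap.ext this

set_option maxHeartbeats 1600000 in
set_option synthInstance.maxHeartbeats 400000 in
/-- for `γ > 0`, the semigroup `exp(t L_0)` generated by
`L_0(ρ) = γ (E_{02} ρ E_{20} - ½(E_{22} ρ + ρ E_{22}))` converges in operator norm, as
`t → +∞`, to the projector
`P(ρ) = (ρ_{00}+ρ_{22}) E_{00} + ρ_{01} E_{01} + ρ_{10} E_{10} + ρ_{11} E_{11}`. -/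
theorem stmt14 (γ : ℝ) (hγ : 0 < γ)
    (L₀ P : Matrix (Fin 3) (Fin 3) ℂ →L[ℂ] Matrix (Fin 3) (Fin 3) ℂ)
    (hL₀ : ∀ ρ, L₀ ρ = (γ : ℂ) •
      (matUnit 0 2 * ρ * matUnit 2 0 -
        (1 / 2 : ℂ) • (matUnit 2 2 * ρ + ρ * matUnit 2 2)))
    (hP : ∀ ρ, P ρ = (ρ 0 0 + ρ 2 2) • matUnit 0 0 + ρ 0 1 • matUnit 0 1 +
      ρ 1 0 • matUnit 1 0 + ρ 1 1 • matUnit 1 1) :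
    Tendsto (fun t : ℝ => NormedSpace.exp (t • L₀)) atTop (nhds P) := by
  -- structure of the generator
  have hL : L₀ = (-(γ : ℂ)/2) • Qop + (-(γ : ℂ)) • Rop := by
    ext ρ i j
    fin_cases i <;> fin_cases j <;>
      simp [hL₀, Qop_apply, Rop_apply, matUnit, Matrix.mul_apply, Fin.sum_univ_three,
        Matrix.single, Matrix.add_apply, Matrix.sub_apply, Matrix.smul_apply] <;> ring
  have hI : (1 : Matrix (Fin 3) (Fin 3) ℂ →L[ℂ] Matrix (Fin 3) (Fin 3) ℂ) = P + Qop + Rop := by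
    ext ρ i j
    fin_cases i <;> fin_cases j <;>
      simp [hP, Qop_apply, Rop_apply, matUnit,
        Matrix.single, Matrix.add_apply, Matrix.sub_apply, Matrix.smul_apply]
  -- explicit formula for the semigroup
  have key : ∀ t : ℝ, NormedSpace.exp (t • L₀)
      = P + Complex.exp ((t : ℂ) * (-(γ : ℂ)/2)) • Qop
          + Complex.exp ((t : ℂ) * (-(γ : ℂ))) • Rop := by
    intro t
    have ht : t • L₀ = ((t : ℂ) * (-(γ : ℂ)/2)) • Qop + ((t : ℂ) * (-(γ : ℂ))) • Rop := by
      have : t • L₀ = (t : ℂ) • L₀ := by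
        rw [← IsScalarTower.algebraMap_smul ℂ t L₀]; norm_num
      rw [this, hL, smul_add, smul_smul, smul_smul]
    rw [ht]
    have e : NormedSpace.exp (((t : ℂ) * (-(γ : ℂ)/2)) • Qop + ((t : ℂ) * (-(γ : ℂ))) • Rop)
        = (1 + (Complex.exp ((t : ℂ) * (-(γ : ℂ)/2)) - 1) • Qop)
          * (1 + (Complex.exp ((t : ℂ) * (-(γ : ℂ))) - 1) • Rop) := by
      letI nr : NormedRing (Matrix (Fin 3) (Fin 3) ℂ →L[ℂ] Matrix (Fin 3) (Fin 3) ℂ) :=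
        @ContinuousLinearMap.toNormedRing ℂ (Matrix (Fin 3) (Fin 3) ℂ) _ _ _
      letI na : NormedAlgebra ℂ (Matrix (Fin 3) (Fin 3) ℂ →L[ℂ] Matrix (Fin 3) (Fin 3) ℂ) :=
        @ContinuousLinearMap.toNormedAlgebra ℂ (Matrix (Fin 3) (Fin 3) ℂ) _ _ _
      letI : NormedAlgebra ℚ (Matrix (Fin 3) (Fin 3) ℂ →L[ℂ] Matrix (Fin 3) (Fin 3) ℂ) :=
        .restrictScalars ℚ ℂ _
      haveI hc : CompleteSpace (Matrix (Fin 3) (Fin 3) ℂ →L[ℂ] Matrix (Fin 3) (Fin 3) ℂ) :=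
        FiniteDimensional.complete ℂ _
      exact (@NormedSpace.exp_add_of_commute _ nr _ hc _ _ (commQR _ _)).trans
        (congrArg₂ (· * ·) (@exp_smul_idem _ nr na hc _ _ Qop_idem)
          (@exp_smul_idem _ nr na hc _ _ Rop_idem))
    rw [e]
    ext ρ i j
    fin_cases i <;> fin_cases j <;>
      simp [hP, ContinuousLinearMap.mul_apply, Qop_apply, Rop_apply, matUnit,
        Matrix.single, Matrix.add_apply, Matrix.sub_apply, Matrix.smul_apply] <;> ring
  -- convergence
  have h1 : Tendsto (fun t : ℝ => Complex.exp ((t : ℂ) * (-(γ : ℂ)/2))) atTop (nhds 0) := by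
    have heq : (fun t : ℝ => Complex.exp ((t : ℂ) * (-(γ : ℂ)/2)))
        = fun t : ℝ => ((Real.exp (t * (-γ/2)) : ℝ) : ℂ) := by
      funext t; rw [Complex.ofReal_exp]; congr 1; push_cast; ring
    rw [heq]
    have : Tendsto (fun t : ℝ => Real.exp (t * (-γ/2))) atTop (nhds 0) :=
      Real.tendsto_exp_atBot.comp (tendsto_id.atTop_mul_const_of_neg (by linarith))
    exact ((Complex.continuous_ofReal.tendsto 0).comp this)
  have h2 : Tendsto (fun t : ℝ => Complex.exp ((t : ℂ) * (-(γ : ℂ)))) atTop (nhds 0) := by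
    have heq : (fun t : ℝ => Complex.exp ((t : ℂ) * (-(γ : ℂ))))
        = fun t : ℝ => ((Real.exp (t * (-γ)) : ℝ) : ℂ) := by
      funext t; rw [Complex.ofReal_exp]; congr 1; push_cast; ring
    rw [heq]
    have : Tendsto (fun t : ℝ => Real.exp (t * (-γ))) atTop (nhds 0) :=
      Real.tendsto_exp_atBot.comp (tendsto_id.atTop_mul_const_of_neg (by linarith))
    exact ((Complex.continuous_ofReal.tendsto 0).comp this)
  have : Tendsto (fun t : ℝ => P + Complex.exp ((t : ℂ) * (-(γ : ℂ)/2)) • Qop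
      + Complex.exp ((t : ℂ) * (-(γ : ℂ))) • Rop) atTop (nhds (P + (0:ℂ) • Qop + (0:ℂ) • Rop)) :=
    (tendsto_const_nhds.add (h1.smul_const Qop)).add (h2.smul_const Rop)
  have h0 : P + (0:ℂ) • Qop + (0:ℂ) • Rop = P := by
    ext ρ i j
    fin_cases i <;> fin_cases j <;>
      simp [Qop_apply, Rop_apply, matUnit, Matrix.single, Matrix.add_apply,
        Matrix.sub_apply, Matrix.smul_apply]
  rw [h0] at this
  exact Tendsto.congr (fun t => (key t).symm) this
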